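/- Under the stated hypotheses, the self-energy matrix Σ := A − G⁻¹ satisfies Σ_{ij} = 0 whenever i > p or j > p; that is, the precision matrix G⁻¹ agrees with A in all entries outside the upper-left p×p block. -/

import Mathlib

open MeasureTheory Matrix Real

lemma integrable_sq_gauss {b : ℝ} (hb : 0 < b) :
    Integrable fun s : ℝ => s ^ 2 * Real.exp (-b * s ^ 2) := by
  apply Integrable.mono' ((integrable_exp_neg_mul_sq (half_pos hb)).const_mul (2 / b))
  · exact (continuous_pow 2).aestronglyMeasurable.mul
      (Real.continuous_exp.comp (by continuity)).aestronglyMeasurable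
  · refine ae_of_all _ fun s => ?_
    have h1 : b / 2 * s ^ 2 ≤ Real.exp (b / 2 * s ^ 2) := by
      have := Real.add_one_le_exp (b / 2 * s ^ 2); linarith
    have h2 : s ^ 2 * Real.exp (-b * s ^ 2) ≤ 2 / b * Real.exp (-(b / 2) * s ^ 2) := by
      have hsq : s ^ 2 ≤ 2 / b * Real.exp (b / 2 * s ^ 2) := by
        calc s ^ 2 = 2 / b * (b / 2 * s ^ 2) := by field_simp
        _ ≤ 2 / b * Real.exp (b / 2 * s ^ 2) := by
            apply mul_le_mul_of_nonneg_left h1 (by positivity)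
      calc s ^ 2 * Real.exp (-b * s ^ 2)
          ≤ 2 / b * Real.exp (b / 2 * s ^ 2) * Real.exp (-b * s ^ 2) :=
            mul_le_mul_of_nonneg_right hsq (Real.exp_pos _).le
        _ = 2 / b * Real.exp (-(b / 2) * s ^ 2) := by
            rw [mul_assoc, ← Real.exp_add]; ring_nf
    calc ‖s ^ 2 * Real.exp (-b * s ^ 2)‖ = s ^ 2 * Real.exp (-b * s ^ 2) := by
          rw [Real.norm_eq_abs, abs_of_nonneg (by positivity)]
      _ ≤ 2 / b * Real.exp (-(b / 2) * s ^ 2) := h2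

lemma integrable_lin_gauss {b : ℝ} (hb : 0 < b) :
    Integrable fun s : ℝ => s * Real.exp (-b * s ^ 2) := by
  apply Integrable.mono' ((integrable_exp_neg_mul_sq hb).add (integrable_sq_gauss hb))
  · exact continuous_id.aestronglyMeasurable.mul
      (Real.continuous_exp.comp (by continuity)).aestronglyMeasurable
  · refine ae_of_all _ fun s => ?_
    have : |s| ≤ 1 + s ^ 2 := by nlinarith [abs_nonneg s, sq_abs s, sq_nonneg (|s| - 1)]
    calc ‖s * Real.exp (-b * s ^ 2)‖ = |s| * Real.exp (-b * s ^ 2) := by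
          rw [Real.norm_eq_abs, abs_mul, abs_of_nonneg (Real.exp_pos _).le]
      _ ≤ (1 + s ^ 2) * Real.exp (-b * s ^ 2) :=
          mul_le_mul_of_nonneg_right this (Real.exp_pos _).le
      _ = Real.exp (-b * s ^ 2) + s ^ 2 * Real.exp (-b * s ^ 2) := by ring

lemma integrable_quad_gauss (a b c α β γ : ℝ) (ha : 0 < a) :
    Integrable fun t : ℝ =>
      (α * t ^ 2 + β * t + γ) * Real.exp (-(1/2) * (a * t ^ 2 + 2 * b * t + c)) := by
  have ha2 : 0 < a / 2 := half_pos ha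
  set d : ℝ := b / a with hd
  have hg : Integrable fun s : ℝ =>
      (α * (s - d) ^ 2 + β * (s - d) + γ) * Real.exp (-(a/2) * s ^ 2) := by
    have h2 := (integrable_sq_gauss ha2).const_mul α
    have h1 := (integrable_lin_gauss ha2).const_mul (β - 2 * α * d)
    have h0 := (integrable_exp_neg_mul_sq ha2).const_mul (α * d ^ 2 - β * d + γ)
    refine ((h2.add h1).add h0).congr (ae_of_all _ fun s => ?_)
    simp only [Pi.add_apply]
    ring
  have := (hg.comp_add_right d).const_mul (Real.exp (b ^ 2 / (2 * a) - c / 2))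
  refine this.congr (ae_of_all _ fun t => ?_)
  have harg : -(a/2) * (t + d) ^ 2 + (b ^ 2 / (2 * a) - c / 2)
      = -(1/2) * (a * t ^ 2 + 2 * b * t + c) := by
    rw [hd]; field_simp; ring
  have : Real.exp (b ^ 2 / (2 * a) - c / 2) * Real.exp (-(a/2) * (t + d) ^ 2)
      = Real.exp (-(1/2) * (a * t ^ 2 + 2 * b * t + c)) := by
    rw [← Real.exp_add, ← harg]; ring_nf
  calc Real.exp (b ^ 2 / (2 * a) - c / 2) *
        ((α * (t + d - d) ^ 2 + β * (t + d - d) + γ) * Real.exp (-(a/2) * (t + d) ^ 2))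
      = (α * t ^ 2 + β * t + γ) *
        (Real.exp (b ^ 2 / (2 * a) - c / 2) * Real.exp (-(a/2) * (t + d) ^ 2)) := by ring
    _ = (α * t ^ 2 + β * t + γ) * Real.exp (-(1/2) * (a * t ^ 2 + 2 * b * t + c)) := by rw [this]
lemma key1d (a b c α β : ℝ) (ha : 0 < a) :
    ∫ t : ℝ, ((a * t + b) * (α * t + β) - α) *
      Real.exp (-(1/2) * (a * t ^ 2 + 2 * b * t + c)) = 0 := by
  set E : ℝ → ℝ := fun t => Real.exp (-(1/2) * (a * t ^ 2 + 2 * b * t + c)) with hE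
  have hf : Integrable fun t : ℝ => (α * t + β) * E t := by
    refine (integrable_quad_gauss a b c 0 α β ha).congr (ae_of_all _ fun t => ?_)
    ring
  have hf' : Integrable fun t : ℝ => -(((a * t + b) * (α * t + β) - α) * E t) := by
    refine (integrable_quad_gauss a b c (-(a*α)) (-(a*β+b*α)) (α - b*β) ha).congr
      (ae_of_all _ fun t => ?_)
    simp only [hE]; ring
  have hderiv : ∀ t : ℝ, HasDerivAt (fun t => (α * t + β) * E t)
      (-(((a * t + b) * (α * t + β) - α) * E t)) t := by
    intro t
    have h1 : HasDerivAt (fun t : ℝ => α * t + β) α t := by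
      simpa using ((hasDerivAt_id t).const_mul α).add_const β
    have hq : HasDerivAt (fun t : ℝ => -(1/2) * (a * t ^ 2 + 2 * b * t + c))
        (-(a * t + b)) t := by
      have : HasDerivAt (fun t : ℝ => a * t ^ 2 + 2 * b * t + c)
          (a * (2 * t ^ 1) + 2 * b * 1) t := by
        exact (((hasDerivAt_pow 2 t).const_mul a).add
          ((hasDerivAt_id t).const_mul (2*b))).add_const c
      have h2 := this.const_mul (-(1/2) : ℝ)
      exact h2.congr_deriv (by ring)
    have h2 : HasDerivAt E (Real.exp (-(1/2) * (a * t ^ 2 + 2 * b * t + c)) * (-(a * t + b))) t :=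
      hq.exp
    have := h1.mul h2
    exact this.congr_deriv (by simp only [hE]; ring)
  have h0 := integral_eq_zero_of_hasDerivAt_of_integrable hderiv hf' hf
  rw [integral_neg, neg_eq_zero] at h0
  exact h0
section Algebra
variable {m : Type*} [Fintype m] [DecidableEq m]

lemma update_eq_add (y : m → ℝ) (k : m) (t : ℝ) :
    Function.update y k t = Function.update y k 0 + t • (Pi.single k (1:ℝ) : m → ℝ) := by
  funext l
  rcases eq_or_ne l k with rfl | h
  · simp
  · simp [Function.update_of_ne h, Pi.single_apply, h]

lemma mulVec_update (A : Matrix m m ℝ) (y : m → ℝ) (k l : m) (t : ℝ) :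
    A.mulVec (Function.update y k t) l
      = A l k * t + A.mulVec (Function.update y k 0) l := by
  rw [update_eq_add, Matrix.mulVec_add, Matrix.mulVec_smul]
  simp [Matrix.mulVec_single]
  ring

lemma quad_expand (A : Matrix m m ℝ) (hA : A.IsSymm) (y : m → ℝ) (k : m) (t : ℝ) :
    Function.update y k t ⬝ᵥ A.mulVec (Function.update y k t)
      = A k k * t ^ 2 + 2 * (A.mulVec (Function.update y k 0) k) * t
        + Function.update y k 0 ⬝ᵥ A.mulVec (Function.update y k 0) := by
  set u := Function.update y k 0 with hu
  have hAs : A.mulVec (Pi.single k (1:ℝ)) = fun l => A l k := by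
    funext l; simp [Matrix.mulVec_single]
  have hcross : u ⬝ᵥ A.mulVec (Pi.single k (1:ℝ)) = A.mulVec u k := by
    rw [hAs]
    simp only [Matrix.mulVec, dotProduct]
    exact Finset.sum_congr rfl fun l _ => by beta_reduce; rw [hA.apply k l]; ring
  rw [update_eq_add, Matrix.mulVec_add, Matrix.mulVec_smul, add_dotProduct,
    smul_dotProduct, dotProduct_add, dotProduct_smul,
    dotProduct_add, dotProduct_smul, hcross]
  have h1 : Pi.single k (1:ℝ) ⬝ᵥ A.mulVec u = A.mulVec u k := by
    rw [single_dotProduct]; ring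
  have h2 : Pi.single k (1:ℝ) ⬝ᵥ A.mulVec (Pi.single k (1:ℝ)) = A k k := by
    rw [hAs, single_dotProduct]; ring
  rw [h1, h2]
  simp only [smul_eq_mul]
  ring

lemma inner_zero (A : Matrix m m ℝ) (hA : A.IsSymm) (k j : m) (hk : 0 < A k k) (y : m → ℝ) :
    ∫ t : ℝ, (A.mulVec (Function.update y k t) k * Function.update y k t j
        - (if j = k then 1 else 0)) *
        Real.exp (-(1/2) * (Function.update y k t ⬝ᵥ A.mulVec (Function.update y k t))) = 0 := by
  have h := key1d (A k k) (A.mulVec (Function.update y k 0) k)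
    (Function.update y k 0 ⬝ᵥ A.mulVec (Function.update y k 0))
    (if j = k then 1 else 0) (if j = k then 0 else y j) hk
  have heq : (fun t : ℝ => (A.mulVec (Function.update y k t) k * Function.update y k t j
        - (if j = k then 1 else 0)) *
        Real.exp (-(1/2) * (Function.update y k t ⬝ᵥ A.mulVec (Function.update y k t))))
      = fun t : ℝ => ((A k k * t + A.mulVec (Function.update y k 0) k) *
          ((if j = k then (1:ℝ) else 0) * t + (if j = k then 0 else y j))
          - (if j = k then 1 else 0)) *
        Real.exp (-(1/2) * (A k k * t ^ 2 + 2 * (A.mulVec (Function.update y k 0) k) * t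
          + Function.update y k 0 ⬝ᵥ A.mulVec (Function.update y k 0))) := by
    funext t
    rw [quad_expand A hA y k t, mulVec_update A y k k t]
    have hval : Function.update y k t j
        = (if j = k then (1:ℝ) else 0) * t + (if j = k then 0 else y j) := by
      rcases eq_or_ne j k with rfl | h
      · simp
      · simp [Function.update_of_ne h, h]
    rw [hval]
  rw [heq]
  exact h

end Algebra

lemma insertNth_eq_update {n : ℕ} (i : Fin (n+1)) (t : ℝ) (r : Fin n → ℝ) :
    (i.insertNth t r : Fin (n+1) → ℝ) = Function.update (i.insertNth 0 r : Fin (n+1) → ℝ) i t := by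
  funext l
  rcases eq_or_ne l i with rfl | hl
  · simp
  · obtain ⟨m, rfl⟩ := Fin.exists_succAbove_eq hl
    simp [Function.update_of_ne (Fin.succAbove_ne i m)]

lemma pi_succ_zero {n : ℕ} (i : Fin (n+1)) (g : (Fin (n+1) → ℝ) → ℝ)
    (hg : Integrable g (volume : Measure (Fin (n+1) → ℝ)))
    (h0 : ∀ z : Fin (n+1) → ℝ, ∫ t : ℝ, g (Function.update z i t) = 0) :
    ∫ z, g z = 0 := by
  have hmp := (MeasureTheory.volume_preserving_piFinSuccAbove (fun _ : Fin (n+1) => ℝ) i).symm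
  rw [← hmp.integral_comp (MeasurableEquiv.measurableEmbedding _) g]
  have hint : Integrable (fun w : ℝ × (Fin n → ℝ) =>
      g ((MeasurableEquiv.piFinSuccAbove (fun _ : Fin (n+1) => ℝ) i).symm w))
      (volume.prod volume) := by
    exact (hmp.integrable_comp_emb (MeasurableEquiv.measurableEmbedding _)).mpr hg
  have : (volume : Measure (ℝ × (Fin n → ℝ))) = (volume : Measure ℝ).prod volume := rfl
  rw [this] at *
  rw [integral_prod_symm _ hint]
  have : ∀ r : Fin n → ℝ, ∫ t : ℝ,
      g ((MeasurableEquiv.piFinSuccAbove (fun _ : Fin (n+1) => ℝ) i).symm (t, r)) = 0 := by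
    intro r
    have hsymm : ∀ t : ℝ, (MeasurableEquiv.piFinSuccAbove (fun _ : Fin (n+1) => ℝ) i).symm (t, r)
        = Function.update (i.insertNth 0 r : Fin (n+1) → ℝ) i t := by
      intro t
      rw [← insertNth_eq_update]
      rfl
    simp_rw [hsymm]
    exact h0 _
  simp_rw [this]
  simp

lemma sum_elim_update {p q : ℕ} (x₁ : Fin p → ℝ) (z : Fin q → ℝ) (i : Fin q) (t : ℝ) :
    Sum.elim x₁ (Function.update z i t)
      = Function.update (Sum.elim x₁ z) (Sum.inr i) t := by
  funext l
  cases l with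
  | inl a => simp [Function.update_of_ne]
  | inr b =>
    rcases eq_or_ne b i with rfl | hb
    · simp
    · have : (Sum.inr b : Fin p ⊕ Fin q) ≠ Sum.inr i := by simp [hb]
      simp [Function.update_of_ne hb, Function.update_of_ne this]


/-- **Sparsity of the classical self-energy for a general impurity measure.**
The Gibbs weight is `exp(−½ xᵀAx) dx₂ dμ₁(x₁)` where `μ₁` is a finite nonzero
Borel measure on `ℝ^p` and the lower-right block `A₂₂` is positive definite.
Then the precision matrix `G⁻¹` agrees with `A` outside the upper-left `p × p`
block, i.e. `Σ := A − G⁻¹` is supported on the fragment block. -/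
theorem classical_self_energy_sparsity_measure
    (p q : ℕ)
    (A : Matrix (Fin p ⊕ Fin q) (Fin p ⊕ Fin q) ℝ) (hA : A.IsSymm)
    (hA22 : ∀ v : Fin q → ℝ, v ≠ 0 → 0 < v ⬝ᵥ (A.toBlocks₂₂).mulVec v)
    (μ₁ : Measure (Fin p → ℝ)) [IsFiniteMeasure μ₁] (hμ₁ : μ₁ ≠ 0)
    (hZint : Integrable (fun x : (Fin p → ℝ) × (Fin q → ℝ) =>
        Real.exp (-(1/2) * (Sum.elim x.1 x.2 ⬝ᵥ A.mulVec (Sum.elim x.1 x.2))))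
        (μ₁.prod volume))
    (hmom : ∀ i j : Fin p ⊕ Fin q,
      Integrable (fun x : (Fin p → ℝ) × (Fin q → ℝ) =>
        Sum.elim x.1 x.2 i * Sum.elim x.1 x.2 j *
          Real.exp (-(1/2) * (Sum.elim x.1 x.2 ⬝ᵥ A.mulVec (Sum.elim x.1 x.2))))
        (μ₁.prod volume))
    (Z : ℝ)
    (hZdef : Z = ∫ x : (Fin p → ℝ) × (Fin q → ℝ),
        Real.exp (-(1/2) * (Sum.elim x.1 x.2 ⬝ᵥ A.mulVec (Sum.elim x.1 x.2)))
        ∂(μ₁.prod volume))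
    (hZpos : 0 < Z)
    (G : Matrix (Fin p ⊕ Fin q) (Fin p ⊕ Fin q) ℝ)
    (hGdef : ∀ i j : Fin p ⊕ Fin q, G i j = (1 / Z) *
      ∫ x : (Fin p → ℝ) × (Fin q → ℝ),
        Sum.elim x.1 x.2 i * Sum.elim x.1 x.2 j *
          Real.exp (-(1/2) * (Sum.elim x.1 x.2 ⬝ᵥ A.mulVec (Sum.elim x.1 x.2)))
        ∂(μ₁.prod volume))
    (hGinv : IsUnit G.det) :
    ∀ i j : Fin p ⊕ Fin q, (i.isRight ∨ j.isRight) → (A - G⁻¹) i j = 0 := by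
  classical
  -- positivity of diagonal entries in the second block
  have hdiag : ∀ i : Fin q, 0 < A (Sum.inr i) (Sum.inr i) := by
    intro i
    have hne : (Pi.single i (1:ℝ) : Fin q → ℝ) ≠ 0 := by
      intro hcontra
      have := congrFun hcontra i
      simp at this
    have h := hA22 (Pi.single i 1) hne
    simpa [single_dotProduct, Matrix.mulVec_single, Matrix.toBlocks₂₂] using h
  -- pointwise rewriting of the weighted row sum
  have hptw : ∀ (i : Fin q) (j : Fin p ⊕ Fin q) (x : (Fin p → ℝ) × (Fin q → ℝ)),
      (∑ l : Fin p ⊕ Fin q, A (Sum.inr i) l *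
        (Sum.elim x.1 x.2 l * Sum.elim x.1 x.2 j *
          Real.exp (-(1/2) * (Sum.elim x.1 x.2 ⬝ᵥ A.mulVec (Sum.elim x.1 x.2)))))
      = A.mulVec (Sum.elim x.1 x.2) (Sum.inr i) * Sum.elim x.1 x.2 j *
          Real.exp (-(1/2) * (Sum.elim x.1 x.2 ⬝ᵥ A.mulVec (Sum.elim x.1 x.2))) := by
    intro i j x
    simp only [Matrix.mulVec, dotProduct]
    rw [Finset.sum_mul, Finset.sum_mul]
    exact Finset.sum_congr rfl fun l _ => by ring
  -- integrability of the row-sum integrand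
  have hP : ∀ (i : Fin q) (j : Fin p ⊕ Fin q),
      Integrable (fun x : (Fin p → ℝ) × (Fin q → ℝ) =>
        A.mulVec (Sum.elim x.1 x.2) (Sum.inr i) * Sum.elim x.1 x.2 j *
          Real.exp (-(1/2) * (Sum.elim x.1 x.2 ⬝ᵥ A.mulVec (Sum.elim x.1 x.2))))
        (μ₁.prod volume) := by
    intro i j
    have h1 : Integrable (fun x : (Fin p → ℝ) × (Fin q → ℝ) =>
        ∑ l : Fin p ⊕ Fin q, A (Sum.inr i) l *
          (Sum.elim x.1 x.2 l * Sum.elim x.1 x.2 j *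
            Real.exp (-(1/2) * (Sum.elim x.1 x.2 ⬝ᵥ A.mulVec (Sum.elim x.1 x.2)))))
        (μ₁.prod volume) :=
      integrable_finset_sum _ (fun l _ => (hmom l j).const_mul _)
    exact h1.congr (ae_of_all _ (hptw i j))
  -- the key integral identity
  have key : ∀ (i : Fin q) (j : Fin p ⊕ Fin q),
      ∫ x : (Fin p → ℝ) × (Fin q → ℝ),
        A.mulVec (Sum.elim x.1 x.2) (Sum.inr i) * Sum.elim x.1 x.2 j *
          Real.exp (-(1/2) * (Sum.elim x.1 x.2 ⬝ᵥ A.mulVec (Sum.elim x.1 x.2)))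
        ∂(μ₁.prod volume)
      = (if j = Sum.inr i then 1 else 0) * Z := by
    intro i j
    have hF : Integrable (fun x : (Fin p → ℝ) × (Fin q → ℝ) =>
        (A.mulVec (Sum.elim x.1 x.2) (Sum.inr i) * Sum.elim x.1 x.2 j
          - (if j = Sum.inr i then 1 else 0)) *
          Real.exp (-(1/2) * (Sum.elim x.1 x.2 ⬝ᵥ A.mulVec (Sum.elim x.1 x.2))))
        (μ₁.prod volume) := by
      refine ((hP i j).sub (hZint.const_mul (if j = Sum.inr i then 1 else 0))).congr
        (ae_of_all _ fun x => ?_)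
      simp only [Pi.sub_apply]
      ring
    have hzero : ∫ x : (Fin p → ℝ) × (Fin q → ℝ),
        (A.mulVec (Sum.elim x.1 x.2) (Sum.inr i) * Sum.elim x.1 x.2 j
          - (if j = Sum.inr i then 1 else 0)) *
          Real.exp (-(1/2) * (Sum.elim x.1 x.2 ⬝ᵥ A.mulVec (Sum.elim x.1 x.2)))
        ∂(μ₁.prod volume) = 0 := by
      obtain ⟨n, hq⟩ : ∃ n, q = n + 1 := ⟨q - 1, (Nat.succ_pred_eq_of_pos i.pos).symm⟩
      subst hq
      rw [integral_prod _ hF]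
      apply integral_eq_zero_of_ae
      filter_upwards [hF.prod_right_ae] with x₁ hx₁
      simp only [Pi.zero_apply]
      refine pi_succ_zero i _ hx₁ ?_
      intro z
      have hup : ∀ t : ℝ, Sum.elim x₁ (Function.update z i t)
          = Function.update (Sum.elim x₁ z) (Sum.inr i) t := fun t => sum_elim_update x₁ z i t
      simp only [hup]
      exact inner_zero A hA (Sum.inr i) j (hdiag i) (Sum.elim x₁ z)
    have hsub := integral_sub (hP i j) (hZint.const_mul (if j = Sum.inr i then 1 else 0))
    have heq : ∫ x : (Fin p → ℝ) × (Fin q → ℝ),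
        (A.mulVec (Sum.elim x.1 x.2) (Sum.inr i) * Sum.elim x.1 x.2 j
          - (if j = Sum.inr i then 1 else 0)) *
          Real.exp (-(1/2) * (Sum.elim x.1 x.2 ⬝ᵥ A.mulVec (Sum.elim x.1 x.2)))
        ∂(μ₁.prod volume)
        = ∫ x : (Fin p → ℝ) × (Fin q → ℝ),
          (A.mulVec (Sum.elim x.1 x.2) (Sum.inr i) * Sum.elim x.1 x.2 j *
            Real.exp (-(1/2) * (Sum.elim x.1 x.2 ⬝ᵥ A.mulVec (Sum.elim x.1 x.2)))
          - (if j = Sum.inr i then 1 else 0) *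
            Real.exp (-(1/2) * (Sum.elim x.1 x.2 ⬝ᵥ A.mulVec (Sum.elim x.1 x.2))))
        ∂(μ₁.prod volume) := by
      apply integral_congr_ae
      refine ae_of_all _ fun x => ?_
      ring
    rw [heq, hsub] at hzero
    rw [integral_const_mul _ _] at hzero
    rw [← hZdef] at hzero
    linarith
  -- the matrix identity rows
  have hAG : ∀ (i : Fin q) (j : Fin p ⊕ Fin q),
      (A * G) (Sum.inr i) j = (1 : Matrix (Fin p ⊕ Fin q) (Fin p ⊕ Fin q) ℝ) (Sum.inr i) j := by
    intro i j
    rw [Matrix.mul_apply, Matrix.one_apply]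
    have hcalc : ∑ l : Fin p ⊕ Fin q, A (Sum.inr i) l * G l j
        = (1/Z) * ∑ l : Fin p ⊕ Fin q,
            ∫ x : (Fin p → ℝ) × (Fin q → ℝ),
              A (Sum.inr i) l * (Sum.elim x.1 x.2 l * Sum.elim x.1 x.2 j *
                Real.exp (-(1/2) * (Sum.elim x.1 x.2 ⬝ᵥ A.mulVec (Sum.elim x.1 x.2))))
            ∂(μ₁.prod volume) := by
      rw [Finset.mul_sum]
      refine Finset.sum_congr rfl fun l _ => ?_
      rw [hGdef l j, integral_const_mul _ _]
      ring
    rw [hcalc, ← integral_finset_sum _ (fun l _ => (hmom l j).const_mul _)]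
    have := integral_congr_ae (μ := μ₁.prod volume) (ae_of_all _ (hptw i j))
    rw [this, key i j]
    rcases eq_or_ne j (Sum.inr i) with rfl | h
    · simp [ne_of_gt hZpos]
    · simp [h, Ne.symm h]
  -- symmetry of G and G⁻¹
  have hGsymm : G.IsSymm := by
    refine Matrix.ext fun i j => ?_
    rw [Matrix.transpose_apply, hGdef i j, hGdef j i]
    congr 1
    apply integral_congr_ae
    refine ae_of_all _ fun x => ?_
    ring
  have hGinvsymm : ∀ i j : Fin p ⊕ Fin q, G⁻¹ i j = G⁻¹ j i := by
    have h : (G⁻¹)ᵀ = G⁻¹ := by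
      rw [Matrix.transpose_nonsing_inv, hGsymm.eq]
    intro i j
    conv_lhs => rw [← h]
    rw [Matrix.transpose_apply]
  -- rows of A agree with rows of G⁻¹ in the second block
  have hrow : ∀ (i : Fin q) (j : Fin p ⊕ Fin q), A (Sum.inr i) j = G⁻¹ (Sum.inr i) j := by
    intro i j
    have h1 : (A * G * G⁻¹) (Sum.inr i) j = A (Sum.inr i) j := by
      rw [Matrix.mul_nonsing_inv_cancel_right _ _ hGinv]
    have h2 : (A * G * G⁻¹) (Sum.inr i) j = G⁻¹ (Sum.inr i) j := by
      rw [Matrix.mul_apply]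
      calc ∑ l : Fin p ⊕ Fin q, (A * G) (Sum.inr i) l * G⁻¹ l j
          = ∑ l : Fin p ⊕ Fin q,
              (1 : Matrix (Fin p ⊕ Fin q) (Fin p ⊕ Fin q) ℝ) (Sum.inr i) l * G⁻¹ l j :=
            Finset.sum_congr rfl fun l _ => by rw [hAG i l]
        _ = ((1 : Matrix (Fin p ⊕ Fin q) (Fin p ⊕ Fin q) ℝ) * G⁻¹) (Sum.inr i) j :=
            (Matrix.mul_apply).symm
        _ = G⁻¹ (Sum.inr i) j := by rw [one_mul]
    rw [← h1, h2]
  -- conclusion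
  intro i j hij
  rw [Matrix.sub_apply, sub_eq_zero]
  cases i with
  | inr i' => exact hrow i' j
  | inl i' =>
    cases j with
    | inl j' => simp at hij
    | inr j' =>
      calc A (Sum.inl i') (Sum.inr j') = A (Sum.inr j') (Sum.inl i') := (hA.apply _ _).symm
        _ = G⁻¹ (Sum.inr j') (Sum.inl i') := hrow j' (Sum.inl i')
        _ = G⁻¹ (Sum.inl i') (Sum.inr j') := hGinvsymm _ _
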